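/- Let R, R', D, D' be real random variables in L⁴ with fourth moments bounded by M ≥ 1, with D and D' independent, and suppose P({|D − R| > ε} ∪ {|D' − R'| > ε}) < ε for some ε ∈ (0,1]. Then |E[R R'] − E[D] E[D']| ≤ C √ε for a constant C depending only on M. -/

import Mathlib

open MeasureTheory ProbabilityTheory
open scoped ENNReal NNReal

section Aux

variable {Ω : Type*} [MeasurableSpace Ω] {P : Measure Ω} [IsProbabilityMeasure P]

lemma mul_mem2 {f g : Ω → ℝ} (hf : MemLp f 4 P) (hg : MemLp g 4 P) :
    MemLp (fun ω => f ω * g ω) 2 P := by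
  have h : (1 : ℝ≥0∞)/2 = 1/4 + 1/4 := by
    rw [ENNReal.div_add_div_same, show (1+1 : ℝ≥0∞) = 2 by norm_num,
      show (4:ℝ≥0∞) = 2*2 by norm_num, ENNReal.div_eq_div_iff] <;> norm_num
  exact (MemLp.smul hg hf (hpqr := ⟨by simpa [one_div] using h.symm⟩) : MemLp (f • g) 2 P)

lemma sq_mem2 {f : Ω → ℝ} (hf : MemLp f 4 P) :
    MemLp (fun ω => f ω ^ 2) 2 P := by
  have := mul_mem2 hf hf
  simpa [sq] using this

lemma int_pow4 {f : Ω → ℝ} (hf : MemLp f 4 P) :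
    Integrable (fun ω => f ω ^ 4) P := by
  have := (sq_mem2 hf).integrable_sq
  have heq : (fun ω => (f ω ^ 2) ^ 2) = fun ω => f ω ^ 4 := by
    funext ω; ring
  rwa [heq] at this

lemma int_mul {f g : Ω → ℝ} (hf : MemLp f 4 P) (hg : MemLp g 4 P) :
    Integrable (fun ω => f ω * g ω) P :=
  (mul_mem2 hf hg).integrable one_le_two

lemma cs_integral {f g : Ω → ℝ} (hf : MemLp f 2 P) (hg : MemLp g 2 P)
    (hf0 : ∀ ω, 0 ≤ f ω) (hg0 : ∀ ω, 0 ≤ g ω) :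
    ∫ ω, f ω * g ω ∂P ≤ Real.sqrt (∫ ω, f ω ^ 2 ∂P) * Real.sqrt (∫ ω, g ω ^ 2 ∂P) := by
  have hpq : Real.HolderConjugate 2 2 := Real.HolderConjugate.two_two
  have h2 : (ENNReal.ofReal 2) = 2 := by norm_num
  have h := integral_mul_le_Lp_mul_Lq_of_nonneg hpq
      (Filter.Eventually.of_forall hf0) (Filter.Eventually.of_forall hg0)
      (h2 ▸ hf) (h2 ▸ hg)
  have e : ∀ (h : Ω → ℝ), ∫ ω, h ω ^ (2:ℝ) ∂P = ∫ ω, h ω ^ 2 ∂P := by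
    intro h
    refine integral_congr_ae (Filter.Eventually.of_forall fun ω => ?_)
    show h ω ^ (2:ℝ) = h ω ^ (2:ℕ)
    rw [show (2:ℝ) = ((2:ℕ):ℝ) by norm_num, Real.rpow_natCast]
  rw [e f, e g] at h
  rw [Real.sqrt_eq_rpow, Real.sqrt_eq_rpow]
  exact h

lemma diff4_bound {f g : Ω → ℝ} (hf : MemLp f 4 P) (hg : MemLp g 4 P) {M : ℝ}
    (hfM : ∫ ω, f ω ^ 4 ∂P ≤ M) (hgM : ∫ ω, g ω ^ 4 ∂P ≤ M) :
    ∫ ω, (f ω - g ω) ^ 4 ∂P ≤ 16 * M := by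
  have h1 : ∫ ω, (f ω - g ω) ^ 4 ∂P ≤ ∫ ω, 8 * (f ω ^ 4 + g ω ^ 4) ∂P := by
    apply integral_mono (int_pow4 (hf.sub hg)) (((int_pow4 hf).add (int_pow4 hg)).const_mul 8)
    intro ω
    simp only [Pi.sub_apply, Pi.add_apply]
    have := sq_nonneg (f ω + g ω)
    have := sq_nonneg (f ω - g ω)
    have := sq_nonneg (f ω ^ 2 - g ω ^ 2)
    have := sq_nonneg (f ω * g ω)
    nlinarith [sq_nonneg ((f ω - g ω)^2 - 2*(f ω ^2 + g ω ^2))]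
  have h2 : ∫ ω, 8 * (f ω ^ 4 + g ω ^ 4) ∂P = 8 * ((∫ ω, f ω ^ 4 ∂P) + ∫ ω, g ω ^ 4 ∂P) := by
    rw [integral_const_mul, integral_add (int_pow4 hf) (int_pow4 hg)]
  linarith

lemma key_bound (X W : Ω → ℝ) (hX : MemLp X 4 P) (hW : MemLp W 4 P)
    (M ε : ℝ) (hM : 1 ≤ M)
    (hXM : ∫ ω, X ω ^ 4 ∂P ≤ M) (hWM : ∫ ω, W ω ^ 4 ∂P ≤ 16 * M)
    (hε : 0 < ε) (hε1 : ε ≤ 1)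
    (S : Set Ω) (hSP : (P S).toReal ≤ ε)
    (hgood : ∀ ω, ω ∉ S → |W ω| ≤ ε) :
    |∫ ω, X ω * W ω ∂P| ≤ 3 * M * Real.sqrt ε := by
  classical
  set S' := toMeasurable P S with hS'def
  have hS' : MeasurableSet S' := measurableSet_toMeasurable P S
  have hS'P : (P S').toReal ≤ ε := by rw [hS'def, measure_toMeasurable]; exact hSP
  have hMpos : (0:ℝ) < M := lt_of_lt_of_le one_pos hM
  -- integrability facts
  have intXW : Integrable (fun ω => X ω * W ω) P := int_mul hX hW
  have intabsXW : Integrable (fun ω => |X ω * W ω|) P := intXW.abs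
  have intabsX : Integrable (fun ω => |X ω|) P :=
    (hX.integrable (by norm_num : (1:ℝ≥0∞) ≤ 4)).abs
  have int_ind : Integrable (S'.indicator fun ω => |X ω * W ω|) P := intabsXW.indicator hS'
  -- step 1 : |∫| ≤ ∫ | |
  have step1 : |∫ ω, X ω * W ω ∂P| ≤ ∫ ω, |X ω * W ω| ∂P := by
    simpa only [Real.norm_eq_abs] using
      norm_integral_le_integral_norm (μ := P) (f := fun ω => X ω * W ω)
  -- step 2 : split over S'
  have step2 : ∫ ω, |X ω * W ω| ∂P ≤
      ε * (∫ ω, |X ω| ∂P) + ∫ ω, (S'.indicator fun ω => |X ω * W ω|) ω ∂P := by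
    rw [← integral_const_mul, ← integral_add (intabsX.const_mul ε) int_ind]
    apply integral_mono intabsXW ((intabsX.const_mul ε).add int_ind)
    intro ω
    by_cases h : ω ∈ S'
    · have : 0 ≤ ε * |X ω| := mul_nonneg hε.le (abs_nonneg _)
      simp only [Pi.add_apply, Set.indicator_of_mem h]
      linarith
    · have hWω : |W ω| ≤ ε := hgood ω (fun hmem => h (subset_toMeasurable P S hmem))
      simp only [Pi.add_apply, Set.indicator_of_notMem h, add_zero]
      calc |X ω * W ω| = |X ω| * |W ω| := abs_mul _ _
        _ ≤ |X ω| * ε := mul_le_mul_of_nonneg_left hWω (abs_nonneg _)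
        _ = ε * |X ω| := by ring
  -- bound ∫ |X|
  have hA0 : (0:ℝ) ≤ ∫ ω, X ω ^ 4 ∂P := integral_nonneg fun ω => by positivity
  have h2X : MemLp X 2 P := hX.mono_exponent (by norm_num)
  have habsX2 : MemLp (fun ω => |X ω|) 2 P := h2X.abs
  have hX2sq : ∫ ω, X ω ^ 2 ∂P ≤ Real.sqrt (∫ ω, X ω ^ 4 ∂P) := by
    have h := cs_integral (sq_mem2 hX) (memLp_const 1)
      (fun ω => sq_nonneg _) (fun _ => zero_le_one)
    have e1 : ∫ ω, X ω ^ 2 * 1 ∂P = ∫ ω, X ω ^ 2 ∂P := by simp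
    have e2 : ∫ ω, (X ω ^ 2) ^ 2 ∂P = ∫ ω, X ω ^ 4 ∂P := by
      refine integral_congr_ae (Filter.Eventually.of_forall fun ω => ?_); ring
    have e3 : ∫ (_ : Ω), (1:ℝ) ^ 2 ∂P = 1 := by simp
    rw [e1, e2, e3, Real.sqrt_one, mul_one] at h
    exact h
  have habsX : ∫ ω, |X ω| ∂P ≤ M := by
    have h := cs_integral habsX2 (memLp_const 1)
      (fun ω => abs_nonneg _) (fun _ => zero_le_one)
    have e1 : ∫ ω, |X ω| * 1 ∂P = ∫ ω, |X ω| ∂P := by simp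
    have e2 : ∫ ω, |X ω| ^ 2 ∂P = ∫ ω, X ω ^ 2 ∂P := by
      refine integral_congr_ae (Filter.Eventually.of_forall fun ω => ?_)
      simp [sq_abs]
    have e3 : ∫ (_ : Ω), (1:ℝ) ^ 2 ∂P = 1 := by simp
    rw [e1, e2, e3, Real.sqrt_one, mul_one] at h
    have h4 : Real.sqrt (∫ ω, X ω ^ 4 ∂P) ≤ M := by
      rw [Real.sqrt_le_left hMpos.le]
      nlinarith
    have h2 : ∫ ω, X ω ^ 2 ∂P ≤ M := le_trans hX2sq h4
    have := Real.sqrt_le_sqrt h2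
    calc ∫ ω, |X ω| ∂P ≤ Real.sqrt (∫ ω, X ω ^ 2 ∂P) := h
      _ ≤ Real.sqrt M := Real.sqrt_le_sqrt h2
      _ ≤ M := by rw [Real.sqrt_le_left hMpos.le]; nlinarith
  -- bound indicator term
  have hindMem : MemLp (S'.indicator fun _ => (1:ℝ)) 2 P :=
    memLp_indicator_const 2 hS' 1 (Or.inr (measure_ne_top P S'))
  have habsXW2 : MemLp (fun ω => |X ω * W ω|) 2 P := by
    exact (mul_mem2 hX hW).abs
  have hindic : ∫ ω, (S'.indicator fun ω => |X ω * W ω|) ω ∂P ≤ 2 * M * Real.sqrt ε := by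
    have heq : (S'.indicator fun ω => |X ω * W ω|) =
        fun ω => |X ω * W ω| * (S'.indicator (fun _ => (1:ℝ))) ω := by
      funext ω
      by_cases h : ω ∈ S' <;> simp [Set.indicator_of_mem, Set.indicator_of_notMem, h]
    rw [heq]
    have h := cs_integral habsXW2 hindMem (fun ω => abs_nonneg _)
      (fun ω => Set.indicator_nonneg (fun _ _ => zero_le_one) ω)
    -- compute ∫ ind^2
    have eInd : ∫ ω, (S'.indicator (fun _ => (1:ℝ))) ω ^ 2 ∂P = (P S').toReal := by
      have : (fun ω => (S'.indicator (fun _ => (1:ℝ))) ω ^ 2) =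
          S'.indicator (fun _ => (1:ℝ)) := by
        funext ω; by_cases hω : ω ∈ S' <;> simp [hω]
      rw [this, integral_indicator_const (1:ℝ) hS', smul_eq_mul, mul_one, measureReal_def]
    -- bound ∫ |XW|^2
    have eXW : ∫ ω, (|X ω * W ω|) ^ 2 ∂P ≤ 4 * M ^ 2 := by
      have e : ∫ ω, (|X ω * W ω|) ^ 2 ∂P = ∫ ω, X ω ^ 2 * W ω ^ 2 ∂P := by
        refine integral_congr_ae (Filter.Eventually.of_forall fun ω => ?_)
        simp [sq_abs, mul_pow]
      rw [e]
      have hcs := cs_integral (sq_mem2 hX) (sq_mem2 hW)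
        (fun ω => sq_nonneg _) (fun ω => sq_nonneg _)
      have e1 : ∫ ω, (X ω ^ 2) ^ 2 ∂P = ∫ ω, X ω ^ 4 ∂P := by
        refine integral_congr_ae (Filter.Eventually.of_forall fun ω => ?_); ring
      have e2 : ∫ ω, (W ω ^ 2) ^ 2 ∂P = ∫ ω, W ω ^ 4 ∂P := by
        refine integral_congr_ae (Filter.Eventually.of_forall fun ω => ?_); ring
      rw [e1, e2] at hcs
      have hB0 : (0:ℝ) ≤ ∫ ω, W ω ^ 4 ∂P := integral_nonneg fun ω => by positivity
      have b1 : Real.sqrt (∫ ω, X ω ^ 4 ∂P) ≤ M := by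
        rw [Real.sqrt_le_left hMpos.le]; nlinarith
      have b2 : Real.sqrt (∫ ω, W ω ^ 4 ∂P) ≤ 4 * M := by
        rw [Real.sqrt_le_left (by positivity)]; nlinarith
      calc ∫ ω, X ω ^ 2 * W ω ^ 2 ∂P
          ≤ Real.sqrt (∫ ω, X ω ^ 4 ∂P) * Real.sqrt (∫ ω, W ω ^ 4 ∂P) := hcs
        _ ≤ M * (4 * M) := mul_le_mul b1 b2 (Real.sqrt_nonneg _) (by positivity)
        _ = 4 * M ^ 2 := by ring
    have bXW : Real.sqrt (∫ ω, (|X ω * W ω|) ^ 2 ∂P) ≤ 2 * M := by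
      rw [Real.sqrt_le_left (by positivity)]; nlinarith
    have bInd : Real.sqrt (∫ ω, (S'.indicator (fun _ => (1:ℝ))) ω ^ 2 ∂P) ≤ Real.sqrt ε := by
      rw [eInd]; exact Real.sqrt_le_sqrt hS'P
    calc ∫ ω, |X ω * W ω| * (S'.indicator (fun _ => (1:ℝ))) ω ∂P
        ≤ Real.sqrt (∫ ω, (|X ω * W ω|) ^ 2 ∂P) *
          Real.sqrt (∫ ω, (S'.indicator (fun _ => (1:ℝ))) ω ^ 2 ∂P) := h
      _ ≤ (2 * M) * Real.sqrt ε := by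
          apply mul_le_mul bXW bInd (Real.sqrt_nonneg _) (by positivity)
      _ = 2 * M * Real.sqrt ε := by ring
  -- combine
  have hεsqrt : ε ≤ Real.sqrt ε := by
    rw [Real.le_sqrt hε.le hε.le]; nlinarith
  have habsXnn : 0 ≤ ∫ ω, |X ω| ∂P := integral_nonneg fun ω => abs_nonneg _
  have t1 : ε * (∫ ω, |X ω| ∂P) ≤ M * Real.sqrt ε := by
    calc ε * (∫ ω, |X ω| ∂P) ≤ ε * M := by nlinarith
      _ ≤ Real.sqrt ε * M := by nlinarith [Real.sqrt_nonneg ε]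
      _ = M * Real.sqrt ε := by ring
  calc |∫ ω, X ω * W ω ∂P| ≤ ∫ ω, |X ω * W ω| ∂P := step1
    _ ≤ ε * (∫ ω, |X ω| ∂P) + ∫ ω, (S'.indicator fun ω => |X ω * W ω|) ω ∂P := step2
    _ ≤ M * Real.sqrt ε + 2 * M * Real.sqrt ε := add_le_add t1 hindic
    _ = 3 * M * Real.sqrt ε := by ring

end Aux

/-- Second-moment coupling estimate: if `R, R', D, D'` have fourth moments
bounded by `M ≥ 1`, `D` and `D'` are independent and
`P({|D − R| > ε} ∪ {|D' − R'| > ε}) < ε` with `ε ∈ (0,1]`, then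
`|E[R R'] − E[D] E[D']| ≤ 8 M √ε`. -/
theorem stmt_8 (Ω : Type*) [MeasurableSpace Ω] (P : Measure Ω) [IsProbabilityMeasure P]
    (R R' D D' : Ω → ℝ)
    (hR : MemLp R 4 P) (hR' : MemLp R' 4 P) (hD : MemLp D 4 P) (hD' : MemLp D' 4 P)
    (M : ℝ) (hM : 1 ≤ M)
    (hRM : ∫ ω, (R ω) ^ 4 ∂P ≤ M) (hR'M : ∫ ω, (R' ω) ^ 4 ∂P ≤ M)
    (hDM : ∫ ω, (D ω) ^ 4 ∂P ≤ M) (hD'M : ∫ ω, (D' ω) ^ 4 ∂P ≤ M)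
    (hindep : IndepFun D D' P)
    (ε : ℝ) (hε : 0 < ε) (hε1 : ε ≤ 1)
    (hcoup : (P ({ω | ε < |D ω - R ω|} ∪ {ω | ε < |D' ω - R' ω|})).toReal < ε) :
    |(∫ ω, R ω * R' ω ∂P) - (∫ ω, D ω ∂P) * ∫ ω, D' ω ∂P| ≤ 8 * M * Real.sqrt ε := by
  set S : Set Ω := {ω | ε < |D ω - R ω|} ∪ {ω | ε < |D' ω - R' ω|} with hSdef
  have hSP : (P S).toReal ≤ ε := hcoup.le
  -- independence
  have hDD' : (∫ ω, D ω * D' ω ∂P) = (∫ ω, D ω ∂P) * ∫ ω, D' ω ∂P :=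
    hindep.integral_fun_mul_eq_mul_integral hD.aestronglyMeasurable hD'.aestronglyMeasurable
  -- integrability
  have intRR' : Integrable (fun ω => R ω * R' ω) P := int_mul hR hR'
  have intDD' : Integrable (fun ω => D ω * D' ω) P := int_mul hD hD'
  have hRD : MemLp (fun ω => R ω - D ω) 4 P := hR.sub hD
  have hR'D' : MemLp (fun ω => R' ω - D' ω) 4 P := hR'.sub hD'
  have int1 : Integrable (fun ω => R' ω * (R ω - D ω)) P := int_mul hR' hRD
  have int2 : Integrable (fun ω => D ω * (R' ω - D' ω)) P := int_mul hD hR'D'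
  -- decomposition
  have hsplit : (∫ ω, R ω * R' ω ∂P) - (∫ ω, D ω * D' ω ∂P) =
      (∫ ω, R' ω * (R ω - D ω) ∂P) + ∫ ω, D ω * (R' ω - D' ω) ∂P := by
    rw [← integral_sub intRR' intDD', ← integral_add int1 int2]
    refine integral_congr_ae (Filter.Eventually.of_forall fun ω => ?_)
    ring
  -- term bounds via key_bound
  have hb1 : |∫ ω, R' ω * (R ω - D ω) ∂P| ≤ 3 * M * Real.sqrt ε := by
    apply key_bound R' (fun ω => R ω - D ω) hR' hRD M ε hM hR'M
      (diff4_bound hR hD hRM hDM) hε hε1 S hSP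
    intro ω hω
    have h1 : ¬ ε < |D ω - R ω| := fun h => hω (Or.inl h)
    rw [abs_sub_comm]
    exact le_of_not_gt h1
  have hb2 : |∫ ω, D ω * (R' ω - D' ω) ∂P| ≤ 3 * M * Real.sqrt ε := by
    apply key_bound D (fun ω => R' ω - D' ω) hD hR'D' M ε hM hDM
      (diff4_bound hR' hD' hR'M hD'M) hε hε1 S hSP
    intro ω hω
    have h2 : ¬ ε < |D' ω - R' ω| := fun h => hω (Or.inr h)
    rw [abs_sub_comm]
    exact le_of_not_gt h2
  have hMε : 0 ≤ M * Real.sqrt ε :=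
    mul_nonneg (le_trans zero_le_one hM) (Real.sqrt_nonneg _)
  calc |(∫ ω, R ω * R' ω ∂P) - (∫ ω, D ω ∂P) * ∫ ω, D' ω ∂P|
      = |(∫ ω, R' ω * (R ω - D ω) ∂P) + ∫ ω, D ω * (R' ω - D' ω) ∂P| := by
        rw [← hDD', hsplit]
    _ ≤ |∫ ω, R' ω * (R ω - D ω) ∂P| + |∫ ω, D ω * (R' ω - D' ω) ∂P| := abs_add_le _ _
    _ ≤ 3 * M * Real.sqrt ε + 3 * M * Real.sqrt ε := add_le_add hb1 hb2
    _ ≤ 8 * M * Real.sqrt ε := by linarith
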